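/- For all 1 ≤ d ≤ k ≤ m, there exists an F_{q^m}-linear code C ⊆ F_{q^m}^k of dimension k−d+1 over F_{q^m} whose minimum rank distance equals d; namely, the evaluation of linearized polynomials of q-degree at most k−d at k fixed F_q-linearly independent points of F_{q^m} yields such a code (a Gabidulin code). -/

import Mathlib

open Module Polynomial

section GabAux

variable (F E : Type*) [Field F] [Fintype F] [Field E] [Fintype E] [Algebra F E]

/-- The `i`-th Frobenius power `x ↦ x ^ (card F) ^ i` as an `F`-linear map on `E`. -/
noncomputable def gabFrob (i : ℕ) : E →ₗ[F] E where
  toFun x := x ^ (Fintype.card F) ^ i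
  map_add' x y := by
    obtain ⟨n, hp, hcard⟩ := FiniteField.card F (ringChar F)
    haveI : Fact (ringChar F).Prime := ⟨hp⟩
    haveI : CharP E (ringChar F) :=
      charP_of_injective_algebraMap (algebraMap F E).injective _
    show (x + y) ^ Fintype.card F ^ i = _
    rw [hcard, ← pow_mul]
    exact add_pow_char_pow x y (ringChar F) (↑n * i)
  map_smul' c x := by
    simp only [Algebra.smul_def, RingHom.id_apply, mul_pow, ← map_pow,
      FiniteField.pow_card_pow]

@[simp] lemma gabFrob_apply (i : ℕ) (x : E) :
    gabFrob F E i x = x ^ (Fintype.card F) ^ i := rfl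

variable {E}

/-- The `F`-linear map given by the linearized polynomial with coefficients `α`. -/
noncomputable def gabL {t : ℕ} (α : Fin t → E) : E →ₗ[F] E :=
  ∑ i : Fin t, α i • gabFrob F E (i : ℕ)

lemma gabL_apply {t : ℕ} (α : Fin t → E) (x : E) :
    gabL F α x = ∑ i : Fin t, α i * x ^ (Fintype.card F) ^ (i : ℕ) := by
  simp [gabL, LinearMap.sum_apply, smul_eq_mul]

/-- The linearized polynomial with coefficients `α`. -/
noncomputable def gabP {t : ℕ} (α : Fin t → E) : E[X] :=
  ∑ i : Fin t, C (α i) * X ^ (Fintype.card F) ^ (i : ℕ)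

lemma gabP_eval {t : ℕ} (α : Fin t → E) (x : E) :
    (gabP F α).eval x = gabL F α x := by
  simp [gabP, gabL_apply, eval_finset_sum]

lemma gabP_coeff {t : ℕ} (α : Fin t → E) (i : Fin t) :
    (gabP F α).coeff ((Fintype.card F) ^ (i : ℕ)) = α i := by
  have hq : 2 ≤ Fintype.card F := Fintype.one_lt_card
  rw [gabP, finset_sum_coeff]
  rw [Finset.sum_eq_single i]
  · simp
  · intro j _ hj
    rw [coeff_C_mul, coeff_X_pow, if_neg, mul_zero]
    intro h
    exact hj (Fin.ext ((Nat.pow_right_injective hq h.symm)))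
  · simp

lemma gabP_ne_zero {t : ℕ} {α : Fin t → E} (hα : α ≠ 0) : gabP F α ≠ 0 := by
  intro h
  apply hα
  funext i
  have := gabP_coeff F α i
  rw [h, coeff_zero] at this
  exact this.symm

lemma gabP_natDegree_le {t : ℕ} (α : Fin (t + 1) → E) :
    (gabP F α).natDegree ≤ (Fintype.card F) ^ t := by
  apply natDegree_sum_le_of_forall_le
  intro i _
  refine (natDegree_mul_le).trans ?_
  simp only [natDegree_C, natDegree_X_pow, zero_add]
  exact Nat.pow_le_pow_right Fintype.card_pos (Nat.lt_succ_iff.mp i.2)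

/-- Key bound: the kernel of a nonzero linearized polynomial of `q`-degree at most `t`
has `F`-dimension at most `t`. -/
lemma gabL_finrank_ker_le {t : ℕ} {α : Fin (t + 1) → E} (hα : α ≠ 0) :
    finrank F (LinearMap.ker (gabL F α)) ≤ t := by
  classical
  have hq : 1 < Fintype.card F := Fintype.one_lt_card
  set K := LinearMap.ker (gabL F α)
  have hcard : Fintype.card K = Fintype.card F ^ finrank F K := card_eq_pow_finrank
  have hsub : ((K : Set E) : Set E).toFinset ⊆ (gabP F α).roots.toFinset := by
    intro x hx
    rw [Set.mem_toFinset] at hx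
    rw [Multiset.mem_toFinset, mem_roots (gabP_ne_zero F hα)]
    rw [SetLike.mem_coe, LinearMap.mem_ker] at hx
    simpa [IsRoot, gabP_eval] using hx
  have h1 : ((K : Set E)).toFinset.card ≤ (gabP F α).roots.toFinset.card :=
    Finset.card_le_card hsub
  have h2 : (gabP F α).roots.toFinset.card ≤ (gabP F α).natDegree :=
    (Multiset.toFinset_card_le _).trans (gabP F α).card_roots'
  have h3 : ((K : Set E)).toFinset.card = Fintype.card K := by
    rw [Set.toFinset_card]; rfl
  have : Fintype.card F ^ finrank F K ≤ Fintype.card F ^ t := by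
    calc Fintype.card F ^ finrank F K = Fintype.card K := hcard.symm
      _ = ((K : Set E)).toFinset.card := h3.symm
      _ ≤ (gabP F α).natDegree := h1.trans h2
      _ ≤ Fintype.card F ^ t := gabP_natDegree_le F α
  exact (Nat.pow_le_pow_iff_right hq).mp this

end GabAux



/-- Existence of Gabidulin (MRD) codes: for all `1 ≤ d ≤ k ≤ m` there is an
`F_{q^m}`-linear code `C ⊆ F_{q^m}^k` of dimension `k - d + 1` whose minimum rank
distance equals `d`. -/
theorem exists_gabidulin_code (F E : Type*) [Field F] [Fintype F] [Field E] [Fintype E]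
    [Algebra F E] (k m d : ℕ) (hm : finrank F E = m)
    (hd : 1 ≤ d) (hdk : d ≤ k) (hkm : k ≤ m) :
    ∃ C : Submodule E (Fin k → E),
      finrank E C = k + 1 - d ∧
      sInf {r : ℕ | ∃ v ∈ C, v ≠ 0 ∧
        finrank F (Submodule.span F (Set.range v)) = r} = d := by
  classical
  set q := Fintype.card F with hqdef
  set s := k - d with hsdef
  have hs1 : s + 1 = k + 1 - d := by omega
  have hsk : s < k := by omega
  have hk : k ≤ finrank F E := hm ▸ hkm
  -- linearly independent evaluation points
  let b := Module.finBasis F E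
  let g : Fin k → E := fun j => b (Fin.castLE hk j)
  have hg : LinearIndependent F g :=
    b.linearIndependent.comp _ (Fin.castLE_injective _)
  set W := Submodule.span F (Set.range g) with hW
  have hWrank : finrank F W = k := by
    rw [hW, finrank_span_eq_card hg, Fintype.card_fin]
  -- the evaluation map
  let ev : (Fin (s + 1) → E) →ₗ[E] (Fin k → E) :=
    LinearMap.pi fun j => ∑ i : Fin (s + 1), (g j ^ q ^ (i : ℕ)) • LinearMap.proj i
  have hev : ∀ α j, ev α j = gabL F α (g j) := by
    intro α j
    simp [ev, gabL_apply, LinearMap.pi_apply, LinearMap.sum_apply, smul_eq_mul, mul_comm]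
    rfl
  have hev0 : ∀ α : Fin (s + 1) → E, ev α = 0 → α = 0 := by
    intro α hα
    by_contra hne
    have hsub : W ≤ LinearMap.ker (gabL F α) := by
      rw [hW, Submodule.span_le]
      rintro _ ⟨j, rfl⟩
      rw [SetLike.mem_coe, LinearMap.mem_ker, ← hev]
      rw [hα]; rfl
    have h1 : finrank F W ≤ finrank F (LinearMap.ker (gabL F α)) :=
      Submodule.finrank_mono hsub
    have h2 := gabL_finrank_ker_le F hne
    omega
  have hinj : Function.Injective ev := by
    rw [← LinearMap.ker_eq_bot, eq_bot_iff]
    intro α hα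
    rw [LinearMap.mem_ker] at hα
    simpa using hev0 α hα
  -- lower bound on the rank of nonzero codewords
  have key : ∀ α : Fin (s + 1) → E, α ≠ 0 →
      d ≤ finrank F (Submodule.span F (Set.range (ev α))) := by
    intro α hα
    set L := gabL F α with hL
    have hrange : Set.range (ev α) = L '' Set.range g := by
      rw [← Set.range_comp]
      exact congrArg Set.range (funext (hev α))
    have hspan : Submodule.span F (Set.range (ev α)) = Submodule.map L W := by
      rw [hrange, hW, Submodule.span_image]
    set f := L.domRestrict W with hf
    have hrn : finrank F (LinearMap.range f) + finrank F (LinearMap.ker f) = k := by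
      rw [LinearMap.finrank_range_add_finrank_ker f, hWrank]
    have hrf : LinearMap.range f = Submodule.map L W := LinearMap.range_domRestrict W L
    have hkf : finrank F (LinearMap.ker f) ≤ s := by
      have hincl : ∀ x : W, x ∈ LinearMap.ker f → W.subtype x ∈ LinearMap.ker L := by
        intro x hx
        rw [LinearMap.mem_ker] at hx ⊢
        exact hx
      have hji : Function.Injective (W.subtype.restrict hincl) := by
        intro a b hab
        have h1 := Subtype.ext_iff.mp hab
        simp only [LinearMap.restrict_apply] at h1
        exact Subtype.ext (Subtype.ext h1)
      exact (LinearMap.finrank_le_finrank_of_injective hji).trans (gabL_finrank_ker_le F hα)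
    rw [hspan, ← hrf]
    omega
  refine ⟨LinearMap.range ev, ?_, ?_⟩
  · -- dimension
    have := LinearMap.finrank_range_add_finrank_ker ev
    rw [LinearMap.ker_eq_bot.mpr hinj, finrank_bot, add_zero,
      Module.finrank_pi] at this
    rw [this, Fintype.card_fin, hs1]
  · -- minimum rank distance
    -- a codeword of rank exactly d
    obtain ⟨α, hα0, hαz⟩ :
        ∃ α : Fin (s + 1) → E, α ≠ 0 ∧ ∀ j : Fin s, ev α (Fin.castLE hsk.le j) = 0 := by
      let π : (Fin k → E) →ₗ[E] (Fin s → E) :=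
        LinearMap.pi fun j => LinearMap.proj (Fin.castLE hsk.le j)
      have : ¬ Function.Injective (π.comp ev) := by
        intro hinj'
        have := LinearMap.finrank_le_finrank_of_injective hinj'
        rw [Module.finrank_pi, Module.finrank_pi, Fintype.card_fin, Fintype.card_fin] at this
        omega
      rw [← LinearMap.ker_eq_bot] at this
      obtain ⟨α, hα, hα0⟩ := Submodule.exists_mem_ne_zero_of_ne_bot this
      rw [LinearMap.mem_ker] at hα
      exact ⟨α, hα0, fun j => congrFun hα j⟩
    set v := ev α with hv
    have hv0 : v ≠ 0 := fun h => hα0 (hev0 α h)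
    have hvlow : ∀ j : Fin k, (j : ℕ) < s → v j = 0 := by
      intro j hj
      have := hαz ⟨(j : ℕ), hj⟩
      rwa [show Fin.castLE hsk.le ⟨(j : ℕ), hj⟩ = j from Fin.ext rfl] at this
    -- the last d coordinates
    let u : Fin d → E := fun i => v ⟨s + (i : ℕ), by omega⟩
    have hspan_le : Submodule.span F (Set.range v) ≤ Submodule.span F (Set.range u) := by
      rw [Submodule.span_le]
      rintro _ ⟨j, rfl⟩
      by_cases hj : (j : ℕ) < s
      · rw [hvlow j hj]; exact Submodule.zero_mem _
      · have hjv : v j = u ⟨(j : ℕ) - s, by omega⟩ := by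
          congr 1
          exact Fin.ext (by simp; omega)
        rw [hjv]
        exact Submodule.subset_span ⟨_, rfl⟩
    have hrank_le : finrank F (Submodule.span F (Set.range v)) ≤ d := by
      refine (Submodule.finrank_mono hspan_le).trans ?_
      refine (finrank_span_le_card (Set.range u)).trans ?_
      rw [Set.toFinset_range]
      exact (Finset.card_image_le).trans (by simp)
    have hrank : finrank F (Submodule.span F (Set.range v)) = d :=
      le_antisymm hrank_le (key α hα0)
    have hdmem : d ∈ {r : ℕ | ∃ w ∈ LinearMap.range ev, w ≠ 0 ∧
        finrank F (Submodule.span F (Set.range w)) = r} :=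
      ⟨v, ⟨α, rfl⟩, hv0, hrank⟩
    refine le_antisymm (Nat.sInf_le hdmem) (le_csInf ⟨d, hdmem⟩ ?_)
    rintro r ⟨w, hw, hw0, rfl⟩
    obtain ⟨β, rfl⟩ := hw
    exact key β (fun h => hw0 (by rw [h]; exact map_zero ev))
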